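/- Let a(t,x) be a symmetric d×d-matrix-valued function on [0,∞)×ℝ^d with Λ^{−1}I ≤ a(t,x) ≤ ΛI for a constant Λ > 0, and suppose for each R > 0 there is a continuous nondecreasing ρ_R with ρ_R(0) = 0 and sup_t max_{i,j} |a_{ij}(t,x) − a_{ij}(t,y)| ≤ ρ_R(|x−y|) for x, y ∈ B(0;R). Let σ(t,x) be the symmetric positive-semidefinite square root of a(t,x). Then Λ^{−1/2} I ≤ σ(t,x) ≤ Λ^{1/2} I, and there exists a constant C depending only on Λ (and d) such that sup_{t≥0} sup_{i,j} |σ_{ij}(t,x) − σ_{ij}(t,y)| ≤ C ρ_R(|x−y|) for all x, y ∈ B(0;R). -/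

import Mathlib

open MeasureTheory Filter Set
open scoped ENNReal Topology

noncomputable section

/-- `ℝ^d` with the Euclidean norm. -/
abbrev EV (d : ℕ) := EuclideanSpace ℝ (Fin d)

section

open scoped ComplexOrder

/-- The square root of a positive semidefinite matrix (the definition `Matrix.PosSemidef.sqrt`
of the older Mathlib, removed since). -/
def Matrix.PosSemidef.sqrt {n : Type*} [Fintype n] [DecidableEq n] {𝕜 : Type*} [RCLike 𝕜]
    {A : Matrix n n 𝕜} (hA : A.PosSemidef) : Matrix n n 𝕜 :=
  hA.1.eigenvectorUnitary.1 * Matrix.diagonal ((↑) ∘ (√·) ∘ hA.1.eigenvalues) *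
  (star hA.1.eigenvectorUnitary : Matrix n n 𝕜)

end

namespace MatrixSqrtAux
open Matrix
open scoped Matrix

variable {n : Type*} [Fintype n] [DecidableEq n]

lemma sum_eq_dot (A : Matrix n n ℝ) (v : n → ℝ) :
    ∑ i, ∑ j, A i j * v i * v j = v ⬝ᵥ A *ᵥ v := by
  simp only [dotProduct, Matrix.mulVec, Finset.mul_sum]
  exact Finset.sum_congr rfl fun i _ => Finset.sum_congr rfl fun j _ => by ring

lemma vecMul_eq_star (U : Matrix n n ℝ) (v : n → ℝ) : v ᵥ* U = star U *ᵥ v := by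
  rw [Matrix.star_eq_conjTranspose, Matrix.conjTranspose_eq_transpose_of_trivial,
    Matrix.mulVec_transpose]

lemma dot_conj (U : Matrix n n ℝ) (g : n → ℝ) (v : n → ℝ) :
    v ⬝ᵥ (U * Matrix.diagonal g * star U) *ᵥ v = ∑ k, g k * ((star U *ᵥ v) k) ^ 2 := by
  rw [← Matrix.mulVec_mulVec, ← Matrix.mulVec_mulVec, Matrix.dotProduct_mulVec, vecMul_eq_star]
  simp only [dotProduct, Matrix.mulVec_diagonal]
  exact Finset.sum_congr rfl fun k _ => by ring

lemma star_mulVec_norm {U : Matrix n n ℝ} (hU : U ∈ Matrix.unitaryGroup n ℝ) (v : n → ℝ) :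
    ∑ k, ((star U *ᵥ v) k) ^ 2 = ∑ i, v i ^ 2 := by
  have h1 : ∀ w : n → ℝ, ∑ k, w k ^ 2 = w ⬝ᵥ w := by
    intro w; simp [dotProduct, sq]
  rw [h1, h1, Matrix.dotProduct_mulVec, vecMul_eq_star, star_star, Matrix.mulVec_mulVec,
    Matrix.mem_unitaryGroup_iff.mp hU, Matrix.one_mulVec]

lemma basis_norm {A : Matrix n n ℝ} (hA : A.IsHermitian) (k : n) :
    ∑ i, (hA.eigenvectorBasis k) i ^ 2 = 1 := by
  have h := hA.eigenvectorBasis.orthonormal.1 k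
  have h2 : ‖hA.eigenvectorBasis k‖ ^ 2 = 1 := by rw [h]; norm_num
  rw [← h2, EuclideanSpace.norm_eq, Real.sq_sqrt (by positivity)]
  exact Finset.sum_congr rfl fun i _ => by rw [Real.norm_eq_abs, sq_abs]

lemma eig_eq_dot {A : Matrix n n ℝ} (hA : A.IsHermitian) (k : n) :
    hA.eigenvalues k =
      (⇑(hA.eigenvectorBasis k) : n → ℝ) ⬝ᵥ A *ᵥ ⇑(hA.eigenvectorBasis k) := by
  simpa using hA.eigenvalues_eq k

lemma le_eig {A : Matrix n n ℝ} (hA : A.IsHermitian) {m : ℝ}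
    (hlo : ∀ v : n → ℝ, m * ∑ i, v i ^ 2 ≤ v ⬝ᵥ A *ᵥ v) (k : n) :
    m ≤ hA.eigenvalues k := by
  have h := hlo (⇑(hA.eigenvectorBasis k))
  rw [basis_norm hA k, mul_one] at h
  rw [eig_eq_dot hA k]; exact h

lemma eig_le {A : Matrix n n ℝ} (hA : A.IsHermitian) {M : ℝ}
    (hhi : ∀ v : n → ℝ, v ⬝ᵥ A *ᵥ v ≤ M * ∑ i, v i ^ 2) (k : n) :
    hA.eigenvalues k ≤ M := by
  have h := hhi (⇑(hA.eigenvectorBasis k))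
  rw [basis_norm hA k, mul_one] at h
  rw [eig_eq_dot hA k]; exact h

lemma sqrt_eq_conj {A : Matrix n n ℝ} (hA : A.PosSemidef) :
    hA.sqrt = (hA.1.eigenvectorUnitary : Matrix n n ℝ) *
      Matrix.diagonal (fun k => Real.sqrt (hA.1.eigenvalues k)) *
      star (hA.1.eigenvectorUnitary : Matrix n n ℝ) := by
  rw [Matrix.PosSemidef.sqrt]
  congr 1

lemma spectral_real {A : Matrix n n ℝ} (hA : A.IsHermitian) :
    A = (hA.eigenvectorUnitary : Matrix n n ℝ) * Matrix.diagonal hA.eigenvalues *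
      star (hA.eigenvectorUnitary : Matrix n n ℝ) := by
  have := hA.spectral_theorem
  simpa [RCLike.ofReal_real_eq_id] using this

lemma _root_.Matrix.PosSemidef.sqrt_mul_self {A : Matrix n n ℝ} (hA : A.PosSemidef) :
    hA.sqrt * hA.sqrt = A := by
  rw [sqrt_eq_conj hA]
  have hU : star (hA.1.eigenvectorUnitary : Matrix n n ℝ) * (hA.1.eigenvectorUnitary : Matrix n n ℝ) = 1 :=
    Unitary.star_mul_self_of_mem hA.1.eigenvectorUnitary.2
  conv_rhs => rw [spectral_real hA.1]
  calc _ = (hA.1.eigenvectorUnitary : Matrix n n ℝ) *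
        (Matrix.diagonal (fun k => Real.sqrt (hA.1.eigenvalues k)) *
          (star (hA.1.eigenvectorUnitary : Matrix n n ℝ) * (hA.1.eigenvectorUnitary : Matrix n n ℝ)) *
          Matrix.diagonal (fun k => Real.sqrt (hA.1.eigenvalues k))) *
        star (hA.1.eigenvectorUnitary : Matrix n n ℝ) := by simp only [mul_assoc]
    _ = _ := by
      rw [hU, mul_one, Matrix.diagonal_mul_diagonal]
      congr 3
      funext k
      exact Real.mul_self_sqrt (hA.eigenvalues_nonneg k)

lemma _root_.Matrix.PosSemidef.posSemidef_sqrt {A : Matrix n n ℝ} (hA : A.PosSemidef) :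
    hA.sqrt.PosSemidef := by
  rw [sqrt_eq_conj hA]
  have h := (Matrix.posSemidef_diagonal_iff.mpr fun k => Real.sqrt_nonneg (hA.1.eigenvalues k) :
    (Matrix.diagonal (fun k => Real.sqrt (hA.1.eigenvalues k)) : Matrix n n ℝ).PosSemidef)
  simpa [Matrix.star_eq_conjTranspose] using
    h.mul_mul_conjTranspose_same (hA.1.eigenvectorUnitary : Matrix n n ℝ)

lemma sqrt_qf {A : Matrix n n ℝ} (hA : A.PosSemidef) {m M : ℝ}
    (hlo : ∀ v : n → ℝ, m * ∑ i, v i ^ 2 ≤ v ⬝ᵥ A *ᵥ v)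
    (hhi : ∀ v : n → ℝ, v ⬝ᵥ A *ᵥ v ≤ M * ∑ i, v i ^ 2) (v : n → ℝ) :
    Real.sqrt m * ∑ i, v i ^ 2 ≤ v ⬝ᵥ hA.sqrt *ᵥ v ∧
      v ⬝ᵥ hA.sqrt *ᵥ v ≤ Real.sqrt M * ∑ i, v i ^ 2 := by
  rw [sqrt_eq_conj hA, dot_conj]
  set U := (hA.1.eigenvectorUnitary : Matrix n n ℝ)
  have hw := star_mulVec_norm hA.1.eigenvectorUnitary.2 v
  set w := star U *ᵥ v with hwdef
  rw [← hw]
  constructor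
  · rw [Finset.mul_sum]
    refine Finset.sum_le_sum fun k _ => ?_
    exact mul_le_mul_of_nonneg_right
      (Real.sqrt_le_sqrt (le_eig hA.1 hlo k)) (sq_nonneg _)
  · rw [Finset.mul_sum]
    refine Finset.sum_le_sum fun k _ => ?_
    exact mul_le_mul_of_nonneg_right
      (Real.sqrt_le_sqrt (eig_le hA.1 hhi k)) (sq_nonneg _)

lemma qf_abs_le {M : Matrix n n ℝ} {r : ℝ} (hr : 0 ≤ r) (hM : ∀ i j, |M i j| ≤ r)
    (u : n → ℝ) :
    |u ⬝ᵥ M *ᵥ u| ≤ r * (Fintype.card n) * ∑ i, u i ^ 2 := by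
  rw [← sum_eq_dot]
  calc |∑ i, ∑ j, M i j * u i * u j| ≤ ∑ i, ∑ j, |M i j * u i * u j| :=
        (Finset.abs_sum_le_sum_abs _ _).trans
          (Finset.sum_le_sum fun i _ => Finset.abs_sum_le_sum_abs _ _)
    _ ≤ ∑ i, ∑ j, r * |u i| * |u j| := by
        refine Finset.sum_le_sum fun i _ => Finset.sum_le_sum fun j _ => ?_
        rw [abs_mul, abs_mul]
        exact mul_le_mul_of_nonneg_right
          (mul_le_mul_of_nonneg_right (hM i j) (abs_nonneg _)) (abs_nonneg _)
    _ = r * ((∑ i, |u i|) * (∑ i, |u i|)) := by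
        rw [Finset.sum_mul_sum, Finset.mul_sum]
        exact Finset.sum_congr rfl fun i _ => by
          rw [Finset.mul_sum]
          exact Finset.sum_congr rfl fun j _ => by ring
    _ ≤ r * ((Fintype.card n) * ∑ i, u i ^ 2) := by
        refine mul_le_mul_of_nonneg_left ?_ hr
        have h := sq_sum_le_card_mul_sum_sq (s := (Finset.univ : Finset n))
          (f := fun i => |u i|)
        simp only [sq_abs, sq] at h ⊢
        simpa [Finset.card_univ, sq] using h
    _ = r * (Fintype.card n) * ∑ i, u i ^ 2 := by ring

end MatrixSqrtAux

open Matrix MatrixSqrtAux in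
/-- **Properties of the square root of the diffusion matrix.** Let `a(t,x)` be a symmetric
`d×d`-matrix-valued function on `[0,∞)×ℝ^d` with `Λ⁻¹ I ≤ a(t,x) ≤ Λ I` (as quadratic forms),
and assume for each `R > 0` a modulus of continuity `ρ_R` as in the hypotheses below. Let
`σ(t,x)` be the symmetric positive semidefinite square root of `a(t,x)`. Then
`Λ^{-1/2} I ≤ σ(t,x) ≤ Λ^{1/2} I`, and there is a constant `C` depending only on `Λ` (and `d`)
with `sup_{t ≥ 0} sup_{i,j} |σ_{ij}(t,x) − σ_{ij}(t,y)| ≤ C ρ_R(|x−y|)` for `x, y ∈ B(0;R)`. -/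
theorem matrix_sqrt_elliptic_and_modulus
    (d : ℕ) (hd : 1 ≤ d) (Λ : ℝ) (hΛ : 0 < Λ) :
    ∃ C > 0,
      ∀ a : ℝ → EV d → Matrix (Fin d) (Fin d) ℝ,
      ∀ hpsd : ∀ t x, (a t x).PosSemidef,
      (∀ t x, 0 ≤ t → (a t x).IsSymm) →
      (∀ t x (v : Fin d → ℝ), 0 ≤ t →
        Λ⁻¹ * ∑ i, v i ^ 2 ≤ ∑ i, ∑ j, a t x i j * v i * v j) →
      (∀ t x (v : Fin d → ℝ), 0 ≤ t →
        ∑ i, ∑ j, a t x i j * v i * v j ≤ Λ * ∑ i, v i ^ 2) →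
      -- `Λ^{-1/2} I ≤ σ(t,x) ≤ Λ^{1/2} I` as quadratic forms:
      ((∀ t x (v : Fin d → ℝ), 0 ≤ t →
          (Real.sqrt Λ)⁻¹ * ∑ i, v i ^ 2
              ≤ ∑ i, ∑ j, (hpsd t x).sqrt i j * v i * v j
          ∧ ∑ i, ∑ j, (hpsd t x).sqrt i j * v i * v j
              ≤ Real.sqrt Λ * ∑ i, v i ^ 2)
      -- and `σ` inherits the modulus of continuity `ρ_R` up to the factor `C`:
      ∧ ∀ R : ℝ, 0 < R → ∀ ρ : ℝ → ℝ, Continuous ρ → Monotone ρ → ρ 0 = 0 →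
          (∀ t x y, 0 ≤ t → ‖x‖ < R → ‖y‖ < R →
            ∀ i j, |a t x i j - a t y i j| ≤ ρ ‖x - y‖) →
          ∀ t x y, 0 ≤ t → ‖x‖ < R → ‖y‖ < R →
            ∀ i j, |(hpsd t x).sqrt i j - (hpsd t y).sqrt i j| ≤ C * ρ ‖x - y‖) := by
  classical
  have hΛs : 0 < Real.sqrt Λ := Real.sqrt_pos.mpr hΛ
  have hd' : (0:ℝ) < d := by exact_mod_cast Nat.lt_of_lt_of_le Nat.zero_lt_one hd
  refine ⟨d * Real.sqrt Λ / 2, by positivity, ?_⟩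
  intro a hpsd hsymm hlo hhi
  have key1 : ∀ t x (v : Fin d → ℝ), 0 ≤ t →
      (Real.sqrt Λ)⁻¹ * ∑ i, v i ^ 2 ≤ v ⬝ᵥ (hpsd t x).sqrt *ᵥ v ∧
        v ⬝ᵥ (hpsd t x).sqrt *ᵥ v ≤ Real.sqrt Λ * ∑ i, v i ^ 2 := by
    intro t x v ht
    have h := sqrt_qf (hpsd t x)
      (fun v => by rw [← sum_eq_dot]; exact hlo t x v ht)
      (fun v => by rw [← sum_eq_dot]; exact hhi t x v ht) v
    rwa [Real.sqrt_inv] at h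
  constructor
  · intro t x v ht
    have h := key1 t x v ht
    rw [sum_eq_dot]
    exact h
  · intro R hR ρ hρc hρm hρ0 hmod t x y ht hx hy i j
    have hρnn : 0 ≤ ρ ‖x - y‖ := hρ0 ▸ hρm (norm_nonneg _)
    set P := (hpsd t x).sqrt with hPdef
    set Q := (hpsd t y).sqrt with hQdef
    have hP2 : P * P = a t x := (hpsd t x).sqrt_mul_self
    have hQ2 : Q * Q = a t y := (hpsd t y).sqrt_mul_self
    have hPh : P.IsHermitian := (hpsd t x).posSemidef_sqrt.1
    have hQh : Q.IsHermitian := (hpsd t y).posSemidef_sqrt.1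
    have hD : (P - Q).IsHermitian := hPh.sub hQh
    have hABentry : ∀ i j, |(a t x - a t y) i j| ≤ ρ ‖x - y‖ := fun i j => by
      simpa [Matrix.sub_apply] using hmod t x y ht hx hy i j
    -- eigenvalue bound for `P - Q`
    have heigbd : ∀ k, |hD.eigenvalues k| ≤ d * Real.sqrt Λ / 2 * ρ ‖x - y‖ := by
      intro k
      set lam := hD.eigenvalues k with hlam
      set u : Fin d → ℝ := ⇑(hD.eigenvectorBasis k) with hudef
      have hunorm : ∑ l, u l ^ 2 = 1 := by
        simpa [hudef] using basis_norm hD k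
      have hDu : (P - Q) *ᵥ u = lam • u := hD.mulVec_eigenvectorBasis k
      have hSlow : 2 * (Real.sqrt Λ)⁻¹ ≤ u ⬝ᵥ (P + Q) *ᵥ u := by
        have h1 := (key1 t x u ht).1
        have h2 := (key1 t y u ht).1
        rw [hunorm, mul_one] at h1 h2
        rw [Matrix.add_mulVec, dotProduct_add]
        linarith
      have hstarD : star (P - Q) = P - Q := hD
      have hABid : u ⬝ᵥ (a t x - a t y) *ᵥ u = lam * (u ⬝ᵥ (P + Q) *ᵥ u) := by
        have halg : (P - Q) * (P + Q) + (P + Q) * (P - Q)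
            = (a t x - a t y) + (a t x - a t y) := by
          have h0 : (P - Q) * (P + Q) + (P + Q) * (P - Q)
              = (P * P - Q * Q) + (P * P - Q * Q) := by noncomm_ring
          rw [h0, hP2, hQ2]
        have e1 : u ⬝ᵥ ((P - Q) * (P + Q)) *ᵥ u = lam * (u ⬝ᵥ (P + Q) *ᵥ u) := by
          rw [← Matrix.mulVec_mulVec, Matrix.dotProduct_mulVec, vecMul_eq_star, hstarD,
            hDu, smul_dotProduct, smul_eq_mul]
        have e2 : u ⬝ᵥ ((P + Q) * (P - Q)) *ᵥ u = lam * (u ⬝ᵥ (P + Q) *ᵥ u) := by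
          rw [← Matrix.mulVec_mulVec, hDu, Matrix.mulVec_smul, dotProduct_smul,
            smul_eq_mul]
        have hqeq := congrArg (fun M : Matrix (Fin d) (Fin d) ℝ => u ⬝ᵥ M *ᵥ u) halg
        simp only [Matrix.add_mulVec, dotProduct_add] at hqeq
        rw [e1, e2] at hqeq
        linarith
      have habs : |u ⬝ᵥ (a t x - a t y) *ᵥ u| ≤ ρ ‖x - y‖ * d := by
        have h := qf_abs_le hρnn hABentry u
        rw [hunorm, mul_one] at h
        simpa [Fintype.card_fin] using h
      have hcomb : |lam| * (2 * (Real.sqrt Λ)⁻¹) ≤ ρ ‖x - y‖ * d := by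
        calc |lam| * (2 * (Real.sqrt Λ)⁻¹) ≤ |lam| * (u ⬝ᵥ (P + Q) *ᵥ u) :=
              mul_le_mul_of_nonneg_left hSlow (abs_nonneg _)
          _ = |lam * (u ⬝ᵥ (P + Q) *ᵥ u)| := by
              rw [abs_mul, abs_of_nonneg (le_trans (by positivity) hSlow)]
          _ = |u ⬝ᵥ (a t x - a t y) *ᵥ u| := by rw [hABid]
          _ ≤ ρ ‖x - y‖ * d := habs
      have hid : |lam| * (2 * (Real.sqrt Λ)⁻¹) * (Real.sqrt Λ / 2) = |lam| := by
        field_simp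
      calc |lam| = |lam| * (2 * (Real.sqrt Λ)⁻¹) * (Real.sqrt Λ / 2) := hid.symm
        _ ≤ ρ ‖x - y‖ * d * (Real.sqrt Λ / 2) :=
            mul_le_mul_of_nonneg_right hcomb (by positivity)
        _ = d * Real.sqrt Λ / 2 * ρ ‖x - y‖ := by ring
    -- quadratic-form bound for `P - Q`
    have hqf : ∀ v : Fin d → ℝ,
        |v ⬝ᵥ (P - Q) *ᵥ v| ≤ d * Real.sqrt Λ / 2 * ρ ‖x - y‖ * ∑ l, v l ^ 2 := by
      intro v
      have hw := star_mulVec_norm hD.eigenvectorUnitary.2 v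
      rw [show (P - Q) = (hD.eigenvectorUnitary : Matrix (Fin d) (Fin d) ℝ) *
          Matrix.diagonal hD.eigenvalues *
          star (hD.eigenvectorUnitary : Matrix (Fin d) (Fin d) ℝ) from spectral_real hD,
        dot_conj]
      set w := star ((hD.eigenvectorUnitary : Matrix (Fin d) (Fin d) ℝ)) *ᵥ v with hwdef
      calc |∑ k, hD.eigenvalues k * w k ^ 2| ≤ ∑ k, |hD.eigenvalues k * w k ^ 2| :=
            Finset.abs_sum_le_sum_abs _ _
        _ ≤ ∑ k, d * Real.sqrt Λ / 2 * ρ ‖x - y‖ * w k ^ 2 := by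
            refine Finset.sum_le_sum fun k _ => ?_
            rw [abs_mul, abs_of_nonneg (sq_nonneg (w k))]
            exact mul_le_mul_of_nonneg_right (heigbd k) (sq_nonneg _)
        _ = d * Real.sqrt Λ / 2 * ρ ‖x - y‖ * ∑ k, w k ^ 2 := by rw [Finset.mul_sum]
        _ = d * Real.sqrt Λ / 2 * ρ ‖x - y‖ * ∑ l, v l ^ 2 := by rw [hw]
    -- entrywise bound via polarization
    have hsd : ∀ (M : Matrix (Fin d) (Fin d) ℝ) (i' j' : Fin d),
        (Pi.single i' 1 : Fin d → ℝ) ⬝ᵥ M *ᵥ (Pi.single j' 1 : Fin d → ℝ) = M i' j' := by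
      intro M i' j'
      rw [Matrix.mulVec_single, single_dotProduct]
      simp
    have hsymD : (P - Q) j i = (P - Q) i j := by simpa using hD.apply i j
    have hq1 : (Pi.single i 1 + Pi.single j 1 : Fin d → ℝ) ⬝ᵥ
          (P - Q) *ᵥ (Pi.single i 1 + Pi.single j 1 : Fin d → ℝ)
        = (P - Q) i i + (P - Q) i j + ((P - Q) j i + (P - Q) j j) := by
      simp only [Matrix.mulVec_add, dotProduct_add, add_dotProduct, hsd]
      ring
    have hq2 : (Pi.single i 1 - Pi.single j 1 : Fin d → ℝ) ⬝ᵥ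
          (P - Q) *ᵥ (Pi.single i 1 - Pi.single j 1 : Fin d → ℝ)
        = (P - Q) i i - (P - Q) i j - ((P - Q) j i - (P - Q) j j) := by
      simp only [Matrix.mulVec_sub, dotProduct_sub, sub_dotProduct, hsd]
      ring
    have hss : ∀ i' : Fin d, ∑ k : Fin d, (Pi.single i' 1 : Fin d → ℝ) k ^ 2 = 1 := by
      intro i'
      have h' : ∀ k : Fin d, (Pi.single i' 1 : Fin d → ℝ) k ^ 2
          = if k = i' then (1:ℝ) else 0 := by
        intro k
        rcases eq_or_ne k i' with h | h <;> simp [Pi.single_apply, h]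
      simp only [h', Finset.sum_ite_eq', Finset.mem_univ, if_true]
    have hs1 : ∑ k, ((Pi.single i 1 + Pi.single j 1 : Fin d → ℝ) k) ^ 2
        + ∑ k, ((Pi.single i 1 - Pi.single j 1 : Fin d → ℝ) k) ^ 2 = 4 := by
      rw [← Finset.sum_add_distrib]
      have : ∀ k : Fin d, ((Pi.single i 1 + Pi.single j 1 : Fin d → ℝ) k) ^ 2
          + ((Pi.single i 1 - Pi.single j 1 : Fin d → ℝ) k) ^ 2
          = 2 * (Pi.single i 1 : Fin d → ℝ) k ^ 2 + 2 * (Pi.single j 1 : Fin d → ℝ) k ^ 2 := by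
        intro k
        simp only [Pi.add_apply, Pi.sub_apply]
        ring
      rw [Finset.sum_congr rfl fun k _ => this k]
      rw [Finset.sum_add_distrib, ← Finset.mul_sum, ← Finset.mul_sum, hss i, hss j]
      norm_num
    have e1 := hqf (Pi.single i 1 + Pi.single j 1 : Fin d → ℝ)
    have e2 := hqf (Pi.single i 1 - Pi.single j 1 : Fin d → ℝ)
    rw [hq1] at e1
    rw [hq2] at e2
    have hgoal : |(P - Q) i j| ≤ d * Real.sqrt Λ / 2 * ρ ‖x - y‖ := by
      have h4 : 4 * (P - Q) i j
          = ((P - Q) i i + (P - Q) i j + ((P - Q) j i + (P - Q) j j))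
            - ((P - Q) i i - (P - Q) i j - ((P - Q) j i - (P - Q) j j)) := by
        rw [hsymD]; ring
      have habs4 : 4 * |(P - Q) i j| = |4 * (P - Q) i j| := by
        rw [abs_mul]; norm_num
      have hchain : |4 * (P - Q) i j|
          ≤ d * Real.sqrt Λ / 2 * ρ ‖x - y‖ * 4 := by
        rw [h4]
        calc |((P - Q) i i + (P - Q) i j + ((P - Q) j i + (P - Q) j j))
              - ((P - Q) i i - (P - Q) i j - ((P - Q) j i - (P - Q) j j))|
            ≤ |((P - Q) i i + (P - Q) i j + ((P - Q) j i + (P - Q) j j))|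
              + |((P - Q) i i - (P - Q) i j - ((P - Q) j i - (P - Q) j j))| :=
              abs_sub _ _
          _ ≤ d * Real.sqrt Λ / 2 * ρ ‖x - y‖
                * (∑ k, ((Pi.single i 1 + Pi.single j 1 : Fin d → ℝ) k) ^ 2)
              + d * Real.sqrt Λ / 2 * ρ ‖x - y‖
                * (∑ k, ((Pi.single i 1 - Pi.single j 1 : Fin d → ℝ) k) ^ 2) :=
              add_le_add e1 e2
          _ = d * Real.sqrt Λ / 2 * ρ ‖x - y‖
                * ((∑ k, ((Pi.single i 1 + Pi.single j 1 : Fin d → ℝ) k) ^ 2)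
                  + ∑ k, ((Pi.single i 1 - Pi.single j 1 : Fin d → ℝ) k) ^ 2) := by
              ring
          _ = d * Real.sqrt Λ / 2 * ρ ‖x - y‖ * 4 := by rw [hs1]
      linarith [habs4, hchain]
    calc |P i j - Q i j| = |(P - Q) i j| := by rw [Matrix.sub_apply]
      _ ≤ d * Real.sqrt Λ / 2 * ρ ‖x - y‖ := hgoal
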